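/- arXiv:1305.4783 — 11 statements merged into one kernel-verified Lean document; each statement's English description precedes it below -/
import Mathlib

section
/- Let x1, ..., x_{n+1} be n+1 points in general position in ℝ^n (i.e., their affine span is ℝ^n), and let p_{i,i+1} be a point on the line through x_i and x_{i+1} distinct from both (indices mod n+1). Then the n+1 points p_{i,i+1} lie in a common affine hyperplane if and only if the product over i of the ratios of directed lengths l(x_i, p_{i,i+1}) / l(p_{i,i+1}, x_{i+1}) equals (-1)^{n+1}. -/
/-- Generalized Menelaus theorem: n+1 points in general position in ℝⁿ,
with a point on each (cyclically consecutive) connecting line; the chosen points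
lie in a common affine hyperplane iff the product of the ratios of directed
lengths equals (-1)^(n+1). -/
theorem menelaus_generalized (n : ℕ) (hn : 1 ≤ n)
    (x p : Fin (n + 1) → (Fin n → ℝ))
    (hgen : affineSpan ℝ (Set.range x) = ⊤)
    (hline : ∀ i : Fin (n + 1), ∃ s : ℝ, p i = x i + s • (x (i + 1) - x i))
    (hpx : ∀ i, p i ≠ x i) (hpx' : ∀ i, p i ≠ x (i + 1))
    (t : Fin (n + 1) → ℝ)
    (ht : ∀ i, p i - x i = t i • (x (i + 1) - p i)) :
    (∃ (φ : (Fin n → ℝ) →ₗ[ℝ] ℝ) (c : ℝ), φ ≠ 0 ∧ ∀ i, φ (p i) = c) ↔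
      (∏ i, t i) = (-1 : ℝ) ^ (n + 1) := by
  classical
  have ht0 : ∀ i, t i ≠ 0 := by
    intro i h
    apply hpx i
    have h2 := ht i
    rw [h, zero_smul, sub_eq_zero] at h2
    exact h2
  have hvs : vectorSpan ℝ (Set.range x) = ⊤ := by
    rw [← direction_affineSpan, hgen]
    exact AffineSubspace.direction_top ℝ _ _
  have hind : AffineIndependent ℝ x := by
    rw [affineIndependent_iff_finrank_vectorSpan_eq ℝ x (n := n) (by simp)]
    rw [hvs, finrank_top]
    simp
  have hne1 : ∀ i : Fin (n + 1), i ≠ i + 1 := by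
    intro i h
    have h1 : (1 : Fin (n + 1)) = 0 := (left_eq_add.mp h)
    have h2 : (1 : Fin (n + 1)).val = (0 : Fin (n + 1)).val := by rw [h1]
    rw [Fin.val_one'] at h2
    simp at h2
    omega
  have hxne : ∀ i, x i ≠ x (i + 1) := fun i h => hne1 i (hind.injective h)
  have htm1 : ∀ i, t i ≠ -1 := by
    intro i h
    apply hxne i
    have h2 := ht i
    rw [h, neg_one_smul, neg_sub] at h2
    -- p i - x i = p i - x (i+1)
    have := sub_right_injective h2
    exact this
  have hsq : ((-1 : ℝ) ^ (n + 1)) * ((-1 : ℝ) ^ (n + 1)) = 1 := by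
    rw [← mul_pow]
    norm_num
  constructor
  · rintro ⟨φ, c, hφ0, hφ⟩
    set b : Fin (n + 1) → ℝ := fun i => φ (x i) - c with hbdef
    have hb : ∀ i, b i = -(t i * b (i + 1)) := by
      intro i
      have h1 : φ (p i) - φ (x i) = t i * (φ (x (i + 1)) - φ (p i)) := by
        have h2 := congrArg φ (ht i)
        rwa [map_sub, map_smul, map_sub, smul_eq_mul] at h2
      rw [hφ i] at h1
      simp only [hbdef]
      linear_combination -h1
    have hbne : ∃ i, b i ≠ 0 := by
      by_contra h
      push_neg at h
      apply hφ0
      have hc : ∀ i, φ (x i) = c := by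
        intro i
        have := h i
        simp only [hbdef] at this
        linarith [sub_eq_zero.mp this]
      have hker : (⊤ : Submodule ℝ (Fin n → ℝ)) ≤ LinearMap.ker φ := by
        rw [← hvs, vectorSpan_def, Submodule.span_le]
        rintro v ⟨v1, ⟨i, rfl⟩, v2, ⟨j, rfl⟩, rfl⟩
        simp [LinearMap.mem_ker, vsub_eq_sub, map_sub, hc i, hc j]
      exact LinearMap.ker_eq_top.mp (top_le_iff.mp hker)
    obtain ⟨i0, hi0⟩ := hbne
    have hstep : ∀ i : Fin (n + 1), b i ≠ 0 → b (i + 1) ≠ 0 := by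
      intro i h hz
      rw [hb i, hz, mul_zero, neg_zero] at h
      exact h rfl
    open Fin.NatCast in
    have hall : ∀ m : ℕ, b (i0 + (m : Fin (n + 1))) ≠ 0 := by
      intro m
      induction m with
      | zero => simpa using hi0
      | succ k ih =>
        have hcast : ((k + 1 : ℕ) : Fin (n + 1)) = (k : Fin (n + 1)) + 1 := by
          push_cast; ring
        rw [hcast, ← add_assoc]
        exact hstep _ ih
    have hballne : ∀ j, b j ≠ 0 := by
      intro j
      have h2 := hall ((j - i0 : Fin (n + 1)).val)
      rwa [Fin.cast_val_eq_self, add_comm, sub_add_cancel] at h2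
    have hprodb : (∏ i, b i) ≠ 0 :=
      Finset.prod_ne_zero_iff.mpr fun i _ => hballne i
    have key : (∏ i, b i) = (-1 : ℝ) ^ (n + 1) * ((∏ i, t i) * ∏ i, b i) := by
      calc (∏ i, b i) = ∏ i, (-1 : ℝ) * (t i * b (i + 1)) :=
            Finset.prod_congr rfl fun i _ => by rw [hb i]; ring
        _ = (-1 : ℝ) ^ (n + 1) * ((∏ i, t i) * ∏ i, b (i + 1)) := by
            rw [Finset.prod_mul_distrib, Finset.prod_mul_distrib, Finset.prod_const,
              Finset.card_univ, Fintype.card_fin]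
        _ = (-1 : ℝ) ^ (n + 1) * ((∏ i, t i) * ∏ i, b i) := by
            rw [show (∏ i, b (i + 1)) = ∏ i, b i from
              Equiv.prod_comp (Equiv.addRight (1 : Fin (n + 1))) b]
    have e1 : ((-1 : ℝ) ^ (n + 1) * (∏ i, t i)) * (∏ i, b i) = 1 * (∏ i, b i) := by
      rw [one_mul, mul_assoc]; exact key.symm
    have e2 : (-1 : ℝ) ^ (n + 1) * (∏ i, t i) = 1 := mul_right_cancel₀ hprodb e1
    calc (∏ i, t i) = (-1 : ℝ) ^ (n + 1) * ((-1 : ℝ) ^ (n + 1) * (∏ i, t i)) := by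
          rw [← mul_assoc, hsq, one_mul]
      _ = (-1 : ℝ) ^ (n + 1) := by rw [e2, mul_one]
  · intro hT
    open Fin.NatCast in
    set cc : ℕ → ℝ := fun j => -(t (j : Fin (n + 1)))⁻¹ with hccdef
    set b : Fin (n + 1) → ℝ := fun i => ∏ j ∈ Finset.range i.val, cc j with hbdef
    have hfull : (∏ j ∈ Finset.range (n + 1), cc j) = 1 := by
      rw [← Fin.prod_univ_eq_prod_range]
      have hcv : ∀ i : Fin (n + 1), cc i.val = -(t i)⁻¹ := fun i => by
        simp [hccdef, Fin.cast_val_eq_self]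
      rw [Finset.prod_congr rfl fun i _ => hcv i]
      calc (∏ i, -(t i)⁻¹) = ∏ i, (-1 : ℝ) * (t i)⁻¹ :=
            Finset.prod_congr rfl fun i _ => by ring
        _ = (-1 : ℝ) ^ (n + 1) * (∏ i, t i)⁻¹ := by
            rw [Finset.prod_mul_distrib, Finset.prod_const, Finset.card_univ,
              Fintype.card_fin, ← Finset.prod_inv_distrib]
        _ = 1 := by
            rw [hT]
            exact mul_inv_cancel₀ (pow_ne_zero _ (by norm_num))
    have hb0 : b 0 = 1 := by simp [hbdef]
    have hb : ∀ i, b (i + 1) = -(t i)⁻¹ * b i := by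
      intro i
      by_cases hi : i.val = n
      · have h0 : i + 1 = 0 := by
          apply Fin.ext
          rw [Fin.val_add_eq_ite]
          simp [hi, Fin.val_one', Nat.mod_eq_of_lt (by omega : 1 < n + 1)]
        have hbi : b i * cc n = 1 := by
          have : b i = ∏ j ∈ Finset.range n, cc j := by rw [hbdef]; simp [hi]
          rw [this, ← Finset.prod_range_succ]
          exact hfull
        have hcn : cc n = -(t i)⁻¹ := by
          open Fin.NatCast in
          have hni : ((n : ℕ) : Fin (n + 1)) = i := by
            apply Fin.ext
            rw [Fin.val_cast_of_lt (by omega)]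
            exact hi.symm
          simp [hccdef, hni]
        rw [h0, hb0, ← hcn, mul_comm]
        exact hbi.symm
      · have h1 : (i + 1).val = i.val + 1 := by
          rw [Fin.val_add_eq_ite]
          simp [Fin.val_one', Nat.mod_eq_of_lt (by omega : 1 < n + 1)]
          omega
        have h2 : b (i + 1) = ∏ j ∈ Finset.range (i.val + 1), cc j := by
          rw [hbdef]; simp only [h1]
        have hci : cc i.val = -(t i)⁻¹ := by simp [hccdef, Fin.cast_val_eq_self]
        rw [h2, Finset.prod_range_succ, hci, hbdef, mul_comm]
    have hb' : ∀ i, b i = -(t i * b (i + 1)) := by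
      intro i
      rw [hb i]
      field_simp
      exact (mul_div_cancel_right₀ _ (ht0 i)).symm
    have hli := (affineIndependent_iff_linearIndependent_vsub ℝ x 0).mp hind
    have hsp : ⊤ ≤ Submodule.span ℝ
        (Set.range fun i : { j : Fin (n + 1) // j ≠ 0 } => x ↑i -ᵥ x 0) := by
      rw [← vectorSpan_range_eq_span_range_vsub_right_ne ℝ x 0, hvs]
    let bas : Module.Basis { j : Fin (n + 1) // j ≠ 0 } ℝ (Fin n → ℝ) := Module.Basis.mk hli hsp
    let φ : (Fin n → ℝ) →ₗ[ℝ] ℝ := bas.constr ℝ fun j => b ↑j - b 0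
    have hφx : ∀ i, φ (x i) = b i + (φ (x 0) - b 0) := by
      intro i
      by_cases h0 : i = 0
      · rw [h0]; ring
      · have hbasapp : φ (x i - x 0) = b i - b 0 := by
          have hx : x i - x 0 = bas ⟨i, h0⟩ := by
            simp [bas, Module.Basis.mk_apply, vsub_eq_sub]
          rw [hx]
          simpa [φ] using bas.constr_basis ℝ (fun j => b ↑j - b 0) ⟨i, h0⟩
        rw [map_sub] at hbasapp
        linarith
    have hb1ne : b (0 + 1) ≠ b 0 := by
      rw [hb 0, hb0, mul_one]
      intro h
      apply htm1 0
      have hinv : (t 0)⁻¹ = -1 := by linarith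
      have h5 := inv_eq_iff_eq_inv.mp hinv
      norm_num at h5
      exact h5
    have hφ0 : φ ≠ 0 := by
      intro h
      apply hb1ne
      have h1 := hφx (0 + 1)
      have h2 := hφx 0
      rw [h] at h1 h2
      simp only [LinearMap.zero_apply] at h1 h2
      linarith
    refine ⟨φ, φ (x 0) - b 0, hφ0, fun i => ?_⟩
    have h1 : φ (p i) - φ (x i) = t i * (φ (x (i + 1)) - φ (p i)) := by
      have h2 := congrArg φ (ht i)
      rwa [map_sub, map_smul, map_sub, smul_eq_mul] at h2
    have e1 := hφx i
    have e2 := hφx (i + 1)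
    have e3 := hb' i
    have h2 : (1 + t i) * (φ (p i) - (φ (x 0) - b 0)) = 0 := by
      linear_combination h1 + e1 + t i * e2 + e3
    have h3 : (1 + t i) ≠ 0 := by
      intro h
      apply htm1 i
      linarith
    rcases mul_eq_zero.mp h2 with h | h
    · exact absurd h h3
    · linarith [sub_eq_zero.mp h]
end

section
/- Let x1, x2, x3, x4 ∈ ℝ^3 be the vertices of a skew quadrilateral and let ρ1, ρ2, ρ3, ρ4 be nonzero reals with ρ1+ρ2, ρ2+ρ3, ρ3+ρ4, ρ4+ρ1 nonzero. Define p12 = (ρ1 x1 + ρ2 x2)/(ρ1+ρ2), p23 = (ρ2 x2 + ρ3 x3)/(ρ2+ρ3), p34 = (ρ3 x3 + ρ4 x4)/(ρ3+ρ4), p41 = (ρ4 x4 + ρ1 x1)/(ρ4+ρ1). Then the four points p12, p23, p34, p41 are coplanar (lie in a common affine plane). -/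
/-- The four cross vertices determined by scalars ρᵢ on the edges of a skew
quadrilateral are coplanar. -/
theorem cross_vertices_coplanar
    (x1 x2 x3 x4 : Fin 3 → ℝ)
    (hskew : ¬ Coplanar ℝ ({x1, x2, x3, x4} : Set (Fin 3 → ℝ)))
    (ρ1 ρ2 ρ3 ρ4 : ℝ)
    (h1 : ρ1 ≠ 0) (h2 : ρ2 ≠ 0) (h3 : ρ3 ≠ 0) (h4 : ρ4 ≠ 0)
    (h12 : ρ1 + ρ2 ≠ 0) (h23 : ρ2 + ρ3 ≠ 0) (h34 : ρ3 + ρ4 ≠ 0) (h41 : ρ4 + ρ1 ≠ 0)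
    (p12 p23 p34 p41 : Fin 3 → ℝ)
    (hp12 : p12 = (ρ1 + ρ2)⁻¹ • (ρ1 • x1 + ρ2 • x2))
    (hp23 : p23 = (ρ2 + ρ3)⁻¹ • (ρ2 • x2 + ρ3 • x3))
    (hp34 : p34 = (ρ3 + ρ4)⁻¹ • (ρ3 • x3 + ρ4 • x4))
    (hp41 : p41 = (ρ4 + ρ1)⁻¹ • (ρ4 • x4 + ρ1 • x1)) :
    Coplanar ℝ ({p12, p23, p34, p41} : Set (Fin 3 → ℝ)) := by
  set s : Set (Fin 3 → ℝ) := {p23, p34, p41} with hs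
  have hm23 : p23 ∈ affineSpan ℝ s := subset_affineSpan ℝ s (by simp [hs])
  have hm34 : p34 ∈ affineSpan ℝ s := subset_affineSpan ℝ s (by simp [hs])
  have hm41 : p41 ∈ affineSpan ℝ s := subset_affineSpan ℝ s (by simp [hs])
  set a : ℝ := (ρ2 + ρ3) / (ρ1 + ρ2)
  set c : ℝ := (ρ4 + ρ1) / (ρ1 + ρ2)
  have hq : c • (p41 -ᵥ p34) +ᵥ p34 ∈ affineSpan ℝ s :=
    AffineSubspace.smul_vsub_vadd_mem _ c hm41 hm34 hm34
  have hmem : p12 ∈ affineSpan ℝ s := by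
    have hkey : p12 = a • (p23 -ᵥ p34) +ᵥ (c • (p41 -ᵥ p34) +ᵥ p34) := by
      funext i
      simp only [hp12, hp23, hp34, hp41, a, c, Pi.vadd_apply, Pi.smul_apply,
        Pi.add_apply, Pi.sub_apply, vsub_eq_sub, vadd_eq_add, smul_eq_mul]
      field_simp
      ring
    rw [hkey]
    exact AffineSubspace.smul_vsub_vadd_mem _ a hm23 hm34 hq
  have : Coplanar ℝ (insert p12 s) := by
    rw [coplanar_insert_iff_of_mem_affineSpan hmem]
    exact coplanar_triple ℝ p23 p34 p41
  simpa [hs] using this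
end

section
/- Let n : ℤ² → ℝ³ and α¹, α² : ℤ² → ℝ be such that the discrete one-form ω(z, i) = α^i(z) (n_i(z) × n(z)) is exact (i.e., there exists x : ℤ² → ℝ³ with x_i − x = α^i n_i × n for i = 1,2). Assume the vectors n, n₁, n₂, n₁₂ at each z are such that n₁ × n, n₂ × n, and n₁₂ × n₁, n₁₂ × n₂ are linearly independent where needed (genericity). Then the compatibility condition (x₁)₂ = (x₂)₁ implies α¹ α¹₂ = α² α²₁ at every point of ℤ². -/
open Matrix

private lemma triple_ne_zero {u v w : Fin 3 → ℝ}
    (h : LinearIndependent ℝ ![u, v, w]) : u ⬝ᵥ v ⨯₃ w ≠ 0 := by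
  rw [triple_product_eq_det]
  have hA : LinearIndependent ℝ (fun i => (Matrix.of ![u, v, w]) i) := h
  have := Matrix.linearIndependent_rows_iff_isUnit.mp hA
  have hdet := (Matrix.isUnit_iff_isUnit_det _).mp this
  exact isUnit_iff_ne_zero.mp hdet

private lemma triple_swap (u v w : Fin 3 → ℝ) :
    u ⬝ᵥ v ⨯₃ w = -(w ⬝ᵥ v ⨯₃ u) := by
  simp [cross_apply, dotProduct, Fin.sum_univ_three]
  ring

/-- Compatibility of the pre-Lelieuvre representation: exactness of the
discrete one-form α^i (n_i × n) implies α¹ α¹₂ = α² α²₁. -/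
theorem pre_lelieuvre_compatibility
    (n x : ℤ × ℤ → Fin 3 → ℝ) (α1 α2 : ℤ × ℤ → ℝ)
    (hx1 : ∀ z : ℤ × ℤ, x (z + (1, 0)) - x z = α1 z • crossProduct (n (z + (1, 0))) (n z))
    (hx2 : ∀ z : ℤ × ℤ, x (z + (0, 1)) - x z = α2 z • crossProduct (n (z + (0, 1))) (n z))
    (hgen1 : ∀ z : ℤ × ℤ, LinearIndependent ℝ ![n z, n (z + (1, 0)), n (z + (1, 1))])
    (hgen2 : ∀ z : ℤ × ℤ, LinearIndependent ℝ ![n z, n (z + (0, 1)), n (z + (1, 1))]) :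
    ∀ z : ℤ × ℤ, α1 z * α1 (z + (0, 1)) = α2 z * α2 (z + (1, 0)) := by
  intro z
  set u := n z with hu
  set p := n (z + (1, 0)) with hp
  set q := n (z + (0, 1)) with hq
  set a := n (z + (1, 1)) with ha
  have e12 : z + (1, 0) + (0, 1) = z + (1, 1) := by
    rw [add_assoc]; norm_num
  have e21 : z + (0, 1) + (1, 0) = z + (1, 1) := by
    rw [add_assoc]; norm_num
  have h1 := hx1 z
  have h2 := hx2 (z + (1, 0)); rw [e12] at h2
  have h3 := hx2 z
  have h4 := hx1 (z + (0, 1)); rw [e21] at h4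
  -- the closing of the square
  have E : α1 z • (p ⨯₃ u) + α2 (z + (1, 0)) • (a ⨯₃ p)
      = α2 z • (q ⨯₃ u) + α1 (z + (0, 1)) • (a ⨯₃ q) := by
    rw [← h1, ← h2, ← h3, ← h4]; abel
  set D1 : ℝ := u ⬝ᵥ p ⨯₃ a with hD1def
  set D2 : ℝ := u ⬝ᵥ q ⨯₃ a with hD2def
  have hD1 : D1 ≠ 0 := triple_ne_zero (hgen1 z)
  have hD2 : D2 ≠ 0 := triple_ne_zero (hgen2 z)
  -- dot the closing relation with a
  have Ea := congrArg (fun v => a ⬝ᵥ v) E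
  simp only [dotProduct_add, dotProduct_smul, smul_eq_mul,
    dot_self_cross, mul_zero, add_zero] at Ea
  rw [triple_swap a p u, triple_swap a q u] at Ea
  have e1 : α1 z * D1 = α2 z * D2 := by
    rw [hD1def, hD2def]; linarith [Ea]
  -- dot the closing relation with u
  have Eu := congrArg (fun v => u ⬝ᵥ v) E
  simp only [dotProduct_add, dotProduct_smul, smul_eq_mul,
    dot_cross_self, mul_zero, zero_add] at Eu

  have sw1 : u ⬝ᵥ a ⨯₃ p = -D1 := by
    rw [hD1def, ← cross_anticomm, dotProduct_neg]
  have sw2 : u ⬝ᵥ a ⨯₃ q = -D2 := by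
    rw [hD2def, ← cross_anticomm, dotProduct_neg]
  rw [sw1, sw2] at Eu
  have e2 : α2 (z + (1, 0)) * D1 = α1 (z + (0, 1)) * D2 := by linarith [Eu]
  have key : α1 z * α1 (z + (0, 1)) * (D1 * D2) = α2 z * α2 (z + (1, 0)) * (D1 * D2) := by
    linear_combination (α1 (z + (0, 1)) * D2) * e1 - (α2 z * D2) * e2
  exact mul_right_cancel₀ (mul_ne_zero hD1 hD2) key
end

section
/- Let α¹, α² : ℤ² → ℝ be nowhere-zero functions satisfying α¹ α¹₂ = α² α²₁ on ℤ². Then there exists a nowhere-zero function ξ : ℤ² → ℝ such that α^i = ξ_i ξ for i = 1, 2 (where ξ_i denotes the shift of ξ in direction i). -/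
private noncomputable def posSeq (a : ℤ → ℝ) (t : ℝ) : ℕ → ℝ
  | 0 => t
  | k + 1 => a k / posSeq a t k

private noncomputable def negSeq (a : ℤ → ℝ) (t : ℝ) : ℕ → ℝ
  | 0 => a (-1) / t
  | k + 1 => a (Int.negSucc (k + 1)) / negSeq a t k

private noncomputable def intSeq (a : ℤ → ℝ) (t : ℝ) : ℤ → ℝ
  | Int.ofNat k => posSeq a t k
  | Int.negSucc k => negSeq a t k

private lemma posSeq_ne (a : ℤ → ℝ) (ha : ∀ n, a n ≠ 0) (t : ℝ) (ht : t ≠ 0) :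
    ∀ k, posSeq a t k ≠ 0 := by
  intro k
  induction k with
  | zero => exact ht
  | succ k ih => exact div_ne_zero (ha _) ih

private lemma negSeq_ne (a : ℤ → ℝ) (ha : ∀ n, a n ≠ 0) (t : ℝ) (ht : t ≠ 0) :
    ∀ k, negSeq a t k ≠ 0 := by
  intro k
  induction k with
  | zero => exact div_ne_zero (ha _) ht
  | succ k ih => exact div_ne_zero (ha _) ih

private lemma seq_exists (a : ℤ → ℝ) (ha : ∀ n, a n ≠ 0) (t : ℝ) (ht : t ≠ 0) :
    ∃ x : ℤ → ℝ, x 0 = t ∧ (∀ n, x n ≠ 0) ∧ ∀ n, a n = x (n + 1) * x n := by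
  refine ⟨intSeq a t, rfl, ?_, ?_⟩
  · intro n
    cases n with
    | ofNat k => exact posSeq_ne a ha t ht k
    | negSucc k => exact negSeq_ne a ha t ht k
  · intro n
    cases n with
    | ofNat k =>
      have h1 : (Int.ofNat k) + 1 = Int.ofNat (k + 1) := rfl
      rw [h1]
      show a k = posSeq a t (k + 1) * posSeq a t k
      rw [posSeq]
      field_simp [posSeq_ne a ha t ht k]
    | negSucc k =>
      cases k with
      | zero =>
        have h1 : (Int.negSucc 0) + 1 = 0 := rfl
        rw [h1]
        show a (Int.negSucc 0) = t * negSeq a t 0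
        rw [negSeq]
        have : Int.negSucc 0 = -1 := rfl
        rw [this]
        field_simp
      | succ k =>
        have h1 : (Int.negSucc (k + 1)) + 1 = Int.negSucc k := by
          rw [Int.negSucc_eq, Int.negSucc_eq]; push_cast; ring
        rw [h1]
        show a (Int.negSucc (k + 1)) = negSeq a t k * negSeq a t (k + 1)
        rw [negSeq]
        field_simp [negSeq_ne a ha t ht k]

/-- Existence of a potential ξ with α^i = ξ_i ξ for nowhere-zero α¹, α²
satisfying the compatibility condition α¹ α¹₂ = α² α²₁. -/
theorem lelieuvre_potential_exists
    (α1 α2 : ℤ × ℤ → ℝ) (h1 : ∀ z, α1 z ≠ 0) (h2 : ∀ z, α2 z ≠ 0)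
    (hcompat : ∀ z : ℤ × ℤ, α1 z * α1 (z + (0, 1)) = α2 z * α2 (z + (1, 0))) :
    ∃ ξ : ℤ × ℤ → ℝ, (∀ z, ξ z ≠ 0) ∧
      (∀ z, α1 z = ξ (z + (1, 0)) * ξ z) ∧
      (∀ z, α2 z = ξ (z + (0, 1)) * ξ z) := by
  -- base row along the x-axis
  obtain ⟨ρ, hρ0, hρne, hρrel⟩ :=
    seq_exists (fun m => α1 (m, 0)) (fun m => h1 (m, 0)) 1 one_ne_zero
  -- extend each column vertically
  choose col hcol0 hcolne hcolrel using
    fun m : ℤ => seq_exists (fun n => α2 (m, n)) (fun n => h2 (m, n)) (ρ m) (hρne m)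
  refine ⟨fun z => col z.1 z.2, fun z => hcolne z.1 z.2, ?_, ?_⟩
  · -- α1 relation, by induction on the second coordinate
    have key : ∀ m n : ℤ, α1 (m, n) = col (m + 1) n * col m n := by
      intro m n
      induction n using Int.induction_on with
      | zero =>
        rw [hcol0, hcol0]
        exact hρrel m
      | succ n ih =>
        have hc := hcompat (m, n)
        simp only [Prod.mk_add_mk] at hc
        norm_num at hc
        have e1 := hcolrel m n
        have e2 := hcolrel (m + 1) n
        rw [e1, e2, ih] at hc
        have hne : col (m + 1) n * col m n ≠ 0 :=
          mul_ne_zero (hcolne _ _) (hcolne _ _)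
        apply mul_left_cancel₀ hne
        linear_combination hc
      | pred n ih =>
        have hc := hcompat (m, -n - 1)
        simp only [Prod.mk_add_mk] at hc
        have h01 : (-n - 1 + 1 : ℤ) = -n := by ring
        rw [h01] at hc
        norm_num at hc
        have e1 := hcolrel m (-n - 1)
        have e2 := hcolrel (m + 1) (-n - 1)
        rw [h01] at e1 e2
        rw [e1, e2, ih] at hc
        have hne : col (m + 1) (-n) * col m (-n) ≠ 0 :=
          mul_ne_zero (hcolne _ _) (hcolne _ _)
        apply mul_right_cancel₀ hne
        linear_combination hc
    intro z
    have hz : z + ((1 : ℤ), (0 : ℤ)) = (z.1 + 1, z.2) := by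
      cases z; simp [Prod.ext_iff]
    rw [show z = (z.1, z.2) from rfl] at *
    simpa using key z.1 z.2
  · intro z
    have := hcolrel z.1 z.2
    simpa using this
end

section
/- Let n : ℤ² → ℝ³ satisfy the discrete Moutard equation n₁₂ − n = a (n₂ − n₁) for a function a : ℤ² → ℝ, and define edge vectors by the discrete Lelieuvre formulae x_i − x = n_i × n, i = 1, 2. Then the closure condition around each elementary quadrilateral holds: (n₁₂ × n₁) + (n₁ × n) = (n₁₂ × n₂) + (n₂ × n), i.e., (x₁)₂ − x computed via direction 1 then 2 equals that computed via direction 2 then 1, so a consistent x : ℤ² → ℝ³ exists (unique up to translation). -/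
noncomputable def intSum (g : ℤ → Fin 3 → ℝ) : ℤ → Fin 3 → ℝ
  | Int.ofNat m => ∑ i ∈ Finset.range m, g i
  | Int.negSucc m => -∑ i ∈ Finset.range (m + 1), g (Int.negSucc i)

lemma intSum_zero (g : ℤ → Fin 3 → ℝ) : intSum g 0 = 0 := by
  show intSum g (Int.ofNat 0) = 0
  simp [intSum]

lemma intSum_step (g : ℤ → Fin 3 → ℝ) (k : ℤ) :
    intSum g (k + 1) - intSum g k = g k := by
  cases k with
  | ofNat m =>
    have : (Int.ofNat m) + 1 = Int.ofNat (m + 1) := rfl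
    rw [this]
    show (∑ i ∈ Finset.range (m + 1), g i) - (∑ i ∈ Finset.range m, g i) = g (Int.ofNat m)
    rw [Finset.sum_range_succ]
    abel
  | negSucc m =>
    cases m with
    | zero =>
      have : Int.negSucc 0 + 1 = Int.ofNat 0 := rfl
      rw [this]
      show (∑ i ∈ Finset.range 0, g i) - (-∑ i ∈ Finset.range 1, g (Int.negSucc i)) = g (Int.negSucc 0)
      simp
    | succ m' =>
      have : Int.negSucc (m' + 1) + 1 = Int.negSucc m' := rfl
      rw [this]
      show (-∑ i ∈ Finset.range (m' + 1), g (Int.negSucc i))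
          - (-∑ i ∈ Finset.range (m' + 1 + 1), g (Int.negSucc i)) = g (Int.negSucc (m' + 1))
      rw [Finset.sum_range_succ (n := m' + 1)]
      abel

lemma eq_of_step (u v : ℤ → Fin 3 → ℝ) (h0 : u 0 = v 0)
    (h : ∀ k, u (k + 1) - u k = v (k + 1) - v k) : ∀ k, u k = v k := by
  intro k
  induction k using Int.induction_on with
  | zero => exact h0
  | succ i ih =>
    have h' := h i
    rw [ih] at h'
    exact sub_left_injective h'
  | pred i ih =>
    have h' := h (-(i : ℤ) - 1)
    have e : (-(i : ℤ) - 1) + 1 = -(i : ℤ) := by ring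
    rw [e, ih] at h'
    exact sub_right_injective h'

lemma cross_closure_aux (u v1 v2 w : Fin 3 → ℝ) (a : ℝ) (h : u - w = a • (v2 - v1)) :
    crossProduct u v1 + crossProduct v1 w = crossProduct u v2 + crossProduct v2 w := by
  have h1 : crossProduct (u - w) v1 = crossProduct (u - w) v2 := by
    rw [h]
    simp only [map_smul, LinearMap.smul_apply, map_sub, LinearMap.sub_apply, cross_self]
    rw [← cross_anticomm v1 v2]
    simp
  have a1 : crossProduct v1 w = -(crossProduct w v1) := (cross_anticomm w v1).symm
  have a2 : crossProduct v2 w = -(crossProduct w v2) := (cross_anticomm w v2).symm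
  simp only [map_sub, LinearMap.sub_apply] at h1
  rw [a1, a2, ← sub_eq_add_neg, ← sub_eq_add_neg]
  exact h1

/-- The discrete Moutard equation implies the closure condition for the
discrete Lelieuvre formulae, so a consistent A-surface x exists, unique up to
translation. -/
theorem moutard_closure
    (n : ℤ × ℤ → Fin 3 → ℝ) (a : ℤ × ℤ → ℝ)
    (hm : ∀ z : ℤ × ℤ,
      n (z + (1, 1)) - n z = a z • (n (z + (0, 1)) - n (z + (1, 0)))) :
    (∀ z : ℤ × ℤ,
        crossProduct (n (z + (1, 1))) (n (z + (1, 0))) + crossProduct (n (z + (1, 0))) (n z)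
          = crossProduct (n (z + (1, 1))) (n (z + (0, 1))) + crossProduct (n (z + (0, 1))) (n z)) ∧
    (∃ x : ℤ × ℤ → Fin 3 → ℝ,
        (∀ z, x (z + (1, 0)) - x z = crossProduct (n (z + (1, 0))) (n z)) ∧
        (∀ z, x (z + (0, 1)) - x z = crossProduct (n (z + (0, 1))) (n z))) ∧
    (∀ x x' : ℤ × ℤ → Fin 3 → ℝ,
        ((∀ z, x (z + (1, 0)) - x z = crossProduct (n (z + (1, 0))) (n z)) ∧
          (∀ z, x (z + (0, 1)) - x z = crossProduct (n (z + (0, 1))) (n z))) →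
        ((∀ z, x' (z + (1, 0)) - x' z = crossProduct (n (z + (1, 0))) (n z)) ∧
          (∀ z, x' (z + (0, 1)) - x' z = crossProduct (n (z + (0, 1))) (n z))) →
        ∃ c : Fin 3 → ℝ, ∀ z, x' z = x z + c) := by
  have key : ∀ z : ℤ × ℤ,
      crossProduct (n (z + (1, 1))) (n (z + (1, 0))) + crossProduct (n (z + (1, 0))) (n z)
        = crossProduct (n (z + (1, 1))) (n (z + (0, 1))) + crossProduct (n (z + (0, 1))) (n z) :=
    fun z => cross_closure_aux _ _ _ _ _ (hm z)
  refine ⟨key, ?_, ?_⟩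
  · -- existence
    set g : ℤ → ℤ → Fin 3 → ℝ := fun p q => crossProduct (n (p, q + 1)) (n (p, q)) with hg
    set e : ℤ → ℤ → Fin 3 → ℝ := fun p q => crossProduct (n (p + 1, q)) (n (p, q)) with he
    have key' : ∀ p q : ℤ, g (p + 1) q + e p q = e p (q + 1) + g p q := by
      intro p q
      have h := key (p, q)
      simp only [Prod.mk_add_mk] at h
      norm_num at h
      simpa [hg, he] using h
    refine ⟨fun z => intSum (fun p => e p 0) z.1 + intSum (g z.1) z.2, ?_, ?_⟩
    · rintro ⟨p, q⟩
      simp only [Prod.mk_add_mk, add_zero]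
      have hD : ∀ q : ℤ, intSum (g (p + 1)) q - intSum (g p) q + e p 0 = e p q := by
        refine eq_of_step _ _ (by simp [intSum_zero]) ?_
        intro q
        have s1 := intSum_step (g (p + 1)) q
        have s2 := intSum_step (g p) q
        have step1 : (intSum (g (p + 1)) (q + 1) - intSum (g p) (q + 1) + e p 0)
            - (intSum (g (p + 1)) q - intSum (g p) q + e p 0)
            = g (p + 1) q - g p q := by
          rw [← s1, ← s2]; abel
        rw [step1]
        have k := key' p q
        linear_combination (norm := abel) k
      have hstep := intSum_step (fun p => e p 0) p
      have hDq := hD q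
      have goal' : (intSum (fun p => e p 0) (p + 1) + intSum (g (p + 1)) q)
          - (intSum (fun p => e p 0) p + intSum (g p) q) = e p q := by
        rw [← hDq, ← hstep]; abel
      exact goal'
    · rintro ⟨p, q⟩
      simp only [Prod.mk_add_mk, add_zero, zero_add]
      have hs := intSum_step (g p) q
      have goal' : (intSum (fun p => e p 0) p + intSum (g p) (q + 1))
          - (intSum (fun p => e p 0) p + intSum (g p) q) = g p q := by
        rw [← hs]; abel
      exact goal'
  · -- uniqueness
    rintro x x' ⟨hx1, hx2⟩ ⟨hx1', hx2'⟩
    refine ⟨x' (0, 0) - x (0, 0), ?_⟩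
    have d1 : ∀ z : ℤ × ℤ, x' (z + (1, 0)) - x (z + (1, 0)) = x' z - x z := by
      intro z
      have h' : x (z + (1, 0)) - x z = x' (z + (1, 0)) - x' z :=
        (hx1 z).trans (hx1' z).symm
      linear_combination (norm := abel) -h'
    have d2 : ∀ z : ℤ × ℤ, x' (z + (0, 1)) - x (z + (0, 1)) = x' z - x z := by
      intro z
      have h' : x (z + (0, 1)) - x z = x' (z + (0, 1)) - x' z :=
        (hx2 z).trans (hx2' z).symm
      linear_combination (norm := abel) -h'
    have col : ∀ p q : ℤ, x' (p, q) - x (p, q) = x' (p, 0) - x (p, 0) := by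
      intro p q
      induction q using Int.induction_on with
      | zero => rfl
      | succ i ih =>
        have h := d2 (p, i)
        simp only [Prod.mk_add_mk, add_zero] at h
        rw [h, ih]
      | pred i ih =>
        have h := d2 (p, -(i : ℤ) - 1)
        simp only [Prod.mk_add_mk, add_zero] at h
        rw [show -(i : ℤ) - 1 + 1 = -(i : ℤ) by ring] at h
        rw [← h]; exact ih
    have row : ∀ p : ℤ, x' (p, 0) - x (p, 0) = x' (0, 0) - x (0, 0) := by
      intro p
      induction p using Int.induction_on with
      | zero => rfl
      | succ i ih =>
        have h := d1 (i, 0)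
        simp only [Prod.mk_add_mk, add_zero] at h
        rw [h, ih]
      | pred i ih =>
        have h := d1 (-(i : ℤ) - 1, 0)
        simp only [Prod.mk_add_mk, add_zero] at h
        rw [show -(i : ℤ) - 1 + 1 = -(i : ℤ) by ring] at h
        rw [← h]; exact ih
    rintro ⟨p, q⟩
    have h := (col p q).trans (row p)
    linear_combination (norm := abel) h
end

section
/- Let τ : ℤ³ → ℝ be nowhere-zero and define a^{ij} = τ_i τ_j / (τ τ_{ij}) for i < j (and a^{ji} = −a^{ij}). Then the system a^{ij}_k = − a^{ij} / (a^{ij} a^{jk} + a^{jk} a^{ki} + a^{ki} a^{ij}) (for pairwise distinct i,j,k in {1,2,3}) holds if and only if τ satisfies the discrete BKP (Miwa) equation τ τ₁₂₃ − τ₁ τ₂₃ + τ₂ τ₁₃ − τ₃ τ₁₂ = 0, assuming all denominators involved are nonzero. -/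
private lemma core1 (t t0 t1 t2 t01 t02 t12 t012 : ℝ) (A D : ℝ)
    (ht : t ≠ 0) (h0 : t0 ≠ 0) (h1 : t1 ≠ 0) (h2 : t2 ≠ 0)
    (h01 : t01 ≠ 0) (h02 : t02 ≠ 0) (h12 : t12 ≠ 0) (h012 : t012 ≠ 0)
    (hS : t1*t02 - t2*t01 - t0*t12 ≠ 0)
    (hA : A = t0*t1/(t*t01))
    (hD : D = (t0*t1*t2*(t1*t02 - t2*t01 - t0*t12))/(t^2*t01*t02*t12)) :
    (t02*t12/(t2*t012) = - A / D)
    ↔ (t*t012 - t0*t12 + t1*t02 - t2*t01 = 0) := by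
  have key2 : - A / D = (-(t*t02*t12))/(t2*(t1*t02 - t2*t01 - t0*t12)) := by
    rw [hA, hD]; field_simp
  rw [key2, div_eq_div_iff (mul_ne_zero h2 h012) (mul_ne_zero h2 hS)]
  constructor
  · intro h
    have h2' : t2*t02*t12 * (t*t012 - t0*t12 + t1*t02 - t2*t01) = 0 := by linear_combination h
    exact (mul_eq_zero.mp h2').resolve_left (mul_ne_zero (mul_ne_zero h2 h02) h12)
  · intro h
    linear_combination (t2*t02*t12) * h

private lemma core2 (t t0 t1 t2 t01 t02 t12 t012 : ℝ) (A D : ℝ)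
    (ht : t ≠ 0) (h0 : t0 ≠ 0) (h1 : t1 ≠ 0) (h2 : t2 ≠ 0)
    (h01 : t01 ≠ 0) (h02 : t02 ≠ 0) (h12 : t12 ≠ 0) (h012 : t012 ≠ 0)
    (hS : t1*t02 - t2*t01 - t0*t12 ≠ 0)
    (hA : A = t0*t2/(t*t02))
    (hD : D = (t0*t1*t2*(t1*t02 - t2*t01 - t0*t12))/(t^2*t01*t02*t12)) :
    (t01*t12/(t1*t012) = - A / D)
    ↔ (t*t012 - t0*t12 + t1*t02 - t2*t01 = 0) := by
  have key2 : - A / D = (-(t*t01*t12))/(t1*(t1*t02 - t2*t01 - t0*t12)) := by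
    rw [hA, hD]; field_simp
  rw [key2, div_eq_div_iff (mul_ne_zero h1 h012) (mul_ne_zero h1 hS)]
  constructor
  · intro h
    have h2' : t1*t01*t12 * (t*t012 - t0*t12 + t1*t02 - t2*t01) = 0 := by linear_combination h
    exact (mul_eq_zero.mp h2').resolve_left (mul_ne_zero (mul_ne_zero h1 h01) h12)
  · intro h
    linear_combination (t1*t01*t12) * h

private lemma core3 (t t0 t1 t2 t01 t02 t12 t012 : ℝ) (A D : ℝ)
    (ht : t ≠ 0) (h0 : t0 ≠ 0) (h1 : t1 ≠ 0) (h2 : t2 ≠ 0)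
    (h01 : t01 ≠ 0) (h02 : t02 ≠ 0) (h12 : t12 ≠ 0) (h012 : t012 ≠ 0)
    (hS : t1*t02 - t2*t01 - t0*t12 ≠ 0)
    (hA : A = t1*t2/(t*t12))
    (hD : D = (t0*t1*t2*(t1*t02 - t2*t01 - t0*t12))/(t^2*t01*t02*t12)) :
    (t01*t02/(t0*t012) = - A / D)
    ↔ (t*t012 - t0*t12 + t1*t02 - t2*t01 = 0) := by
  have key2 : - A / D = (-(t*t01*t02))/(t0*(t1*t02 - t2*t01 - t0*t12)) := by
    rw [hA, hD]; field_simp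
  rw [key2, div_eq_div_iff (mul_ne_zero h0 h012) (mul_ne_zero h0 hS)]
  constructor
  · intro h
    have h2' : t0*t01*t02 * (t*t012 - t0*t12 + t1*t02 - t2*t01) = 0 := by linear_combination h
    exact (mul_eq_zero.mp h2').resolve_left (mul_ne_zero (mul_ne_zero h0 h01) h02)
  · intro h
    linear_combination (t0*t01*t02) * h

private lemma flipRel {x' x P Q : ℝ} (hPQ : Q = P) (h : x' = -x / P) : -x' = -(-x) / Q := by
  rw [h, hPQ]; ring

/-- The τ-parametrized (lexicographic) Moutard coefficients satisfy the cube
relation iff τ satisfies the discrete BKP (Miwa) equation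
τ τ₁₂₃ − τ₁ τ₂₃ + τ₂ τ₁₃ − τ₃ τ₁₂ = 0. -/
theorem tau_parametrization_iff_bkp
    (τ : (Fin 3 → ℤ) → ℝ) (hτ : ∀ z, τ z ≠ 0)
    (a : Fin 3 → Fin 3 → (Fin 3 → ℤ) → ℝ)
    (ha : ∀ (i j : Fin 3), i < j → ∀ z,
      a i j z = τ (z + Pi.single i 1) * τ (z + Pi.single j 1)
        / (τ z * τ (z + Pi.single i 1 + Pi.single j 1)))
    (hskew : ∀ i j z, a j i z = - a i j z)
    (hden : ∀ z : Fin 3 → ℤ,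
      a 0 1 z * a 1 2 z + a 1 2 z * a 2 0 z + a 2 0 z * a 0 1 z ≠ 0) :
    (∀ (i j k : Fin 3), i ≠ j → j ≠ k → i ≠ k → ∀ z : Fin 3 → ℤ,
      a i j (z + Pi.single k 1)
        = - a i j z / (a i j z * a j k z + a j k z * a k i z + a k i z * a i j z))
    ↔ (∀ z : Fin 3 → ℤ,
        τ z * τ (z + Pi.single 0 1 + Pi.single 1 1 + Pi.single 2 1)
          - τ (z + Pi.single 0 1) * τ (z + Pi.single 1 1 + Pi.single 2 1)
          + τ (z + Pi.single 1 1) * τ (z + Pi.single 0 1 + Pi.single 2 1)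
          - τ (z + Pi.single 2 1) * τ (z + Pi.single 0 1 + Pi.single 1 1) = 0) := by
  have A01 : ∀ z, a 0 1 z = τ (z + Pi.single 0 1) * τ (z + Pi.single 1 1)
      / (τ z * τ (z + Pi.single 0 1 + Pi.single 1 1)) := ha 0 1 (by decide)
  have A02 : ∀ z, a 0 2 z = τ (z + Pi.single 0 1) * τ (z + Pi.single 2 1)
      / (τ z * τ (z + Pi.single 0 1 + Pi.single 2 1)) := ha 0 2 (by decide)
  have A12 : ∀ z, a 1 2 z = τ (z + Pi.single 1 1) * τ (z + Pi.single 2 1)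
      / (τ z * τ (z + Pi.single 1 1 + Pi.single 2 1)) := ha 1 2 (by decide)
  have hDval : ∀ z, a 0 1 z * a 1 2 z + a 1 2 z * a 2 0 z + a 2 0 z * a 0 1 z
      = (τ (z + Pi.single 0 1) * τ (z + Pi.single 1 1) * τ (z + Pi.single 2 1)
          * (τ (z + Pi.single 1 1) * τ (z + Pi.single 0 1 + Pi.single 2 1)
            - τ (z + Pi.single 2 1) * τ (z + Pi.single 0 1 + Pi.single 1 1)
            - τ (z + Pi.single 0 1) * τ (z + Pi.single 1 1 + Pi.single 2 1)))
        / ((τ z)^2 * τ (z + Pi.single 0 1 + Pi.single 1 1)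
            * τ (z + Pi.single 0 1 + Pi.single 2 1) * τ (z + Pi.single 1 1 + Pi.single 2 1)) := by
    intro z
    have n1 := hτ z
    have n2 := hτ (z + Pi.single 0 1)
    have n3 := hτ (z + Pi.single 1 1)
    have n4 := hτ (z + Pi.single 2 1)
    have n5 := hτ (z + Pi.single 0 1 + Pi.single 1 1)
    have n6 := hτ (z + Pi.single 0 1 + Pi.single 2 1)
    have n7 := hτ (z + Pi.single 1 1 + Pi.single 2 1)
    rw [hskew 0 2 z, A01 z, A02 z, A12 z]
    field_simp
    ring
  have hSall : ∀ z : Fin 3 → ℤ, τ (z + Pi.single 1 1) * τ (z + Pi.single 0 1 + Pi.single 2 1)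
      - τ (z + Pi.single 2 1) * τ (z + Pi.single 0 1 + Pi.single 1 1)
      - τ (z + Pi.single 0 1) * τ (z + Pi.single 1 1 + Pi.single 2 1) ≠ 0 := by
    intro z h0
    apply hden z
    rw [hDval z, h0, mul_zero, zero_div]
  have E1 : ∀ z, (a 0 1 (z + Pi.single 2 1) = -a 0 1 z
      / (a 0 1 z * a 1 2 z + a 1 2 z * (-a 0 2 z) + (-a 0 2 z) * a 0 1 z))
      ↔ (τ z * τ (z + Pi.single 0 1 + Pi.single 1 1 + Pi.single 2 1)
          - τ (z + Pi.single 0 1) * τ (z + Pi.single 1 1 + Pi.single 2 1)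
          + τ (z + Pi.single 1 1) * τ (z + Pi.single 0 1 + Pi.single 2 1)
          - τ (z + Pi.single 2 1) * τ (z + Pi.single 0 1 + Pi.single 1 1) = 0) := by
    intro z
    have hD : a 0 1 z * a 1 2 z + a 1 2 z * (-a 0 2 z) + (-a 0 2 z) * a 0 1 z
        = (τ (z + Pi.single 0 1) * τ (z + Pi.single 1 1) * τ (z + Pi.single 2 1)
          * (τ (z + Pi.single 1 1) * τ (z + Pi.single 0 1 + Pi.single 2 1)
            - τ (z + Pi.single 2 1) * τ (z + Pi.single 0 1 + Pi.single 1 1)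
            - τ (z + Pi.single 0 1) * τ (z + Pi.single 1 1 + Pi.single 2 1)))
        / ((τ z)^2 * τ (z + Pi.single 0 1 + Pi.single 1 1)
            * τ (z + Pi.single 0 1 + Pi.single 2 1) * τ (z + Pi.single 1 1 + Pi.single 2 1)) := by
      rw [← hDval z, hskew 0 2 z]
      try ring
    rw [A01 (z + Pi.single 2 1),
      show z + Pi.single 2 1 + Pi.single 0 1 = z + Pi.single 0 1 + Pi.single 2 1 from
        add_right_comm z _ _,
      show z + Pi.single 2 1 + Pi.single 1 1 = z + Pi.single 1 1 + Pi.single 2 1 from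
        add_right_comm z _ _,
      show z + Pi.single 0 1 + Pi.single 2 1 + Pi.single 1 1
          = z + Pi.single 0 1 + Pi.single 1 1 + Pi.single 2 1 from
        add_right_comm (z + Pi.single 0 1) _ _]
    exact core1 (τ z) (τ (z + Pi.single 0 1)) (τ (z + Pi.single 1 1)) (τ (z + Pi.single 2 1))
      (τ (z + Pi.single 0 1 + Pi.single 1 1)) (τ (z + Pi.single 0 1 + Pi.single 2 1))
      (τ (z + Pi.single 1 1 + Pi.single 2 1))
      (τ (z + Pi.single 0 1 + Pi.single 1 1 + Pi.single 2 1)) _ _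
      (hτ _) (hτ _) (hτ _) (hτ _) (hτ _) (hτ _) (hτ _) (hτ _) (hSall z) (A01 z) hD
  have E2 : ∀ z, (a 0 2 (z + Pi.single 1 1) = -a 0 2 z
      / (a 0 2 z * (-a 1 2 z) + (-a 1 2 z) * (-a 0 1 z) + (-a 0 1 z) * a 0 2 z))
      ↔ (τ z * τ (z + Pi.single 0 1 + Pi.single 1 1 + Pi.single 2 1)
          - τ (z + Pi.single 0 1) * τ (z + Pi.single 1 1 + Pi.single 2 1)
          + τ (z + Pi.single 1 1) * τ (z + Pi.single 0 1 + Pi.single 2 1)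
          - τ (z + Pi.single 2 1) * τ (z + Pi.single 0 1 + Pi.single 1 1) = 0) := by
    intro z
    have hD : a 0 2 z * (-a 1 2 z) + (-a 1 2 z) * (-a 0 1 z) + (-a 0 1 z) * a 0 2 z
        = (τ (z + Pi.single 0 1) * τ (z + Pi.single 1 1) * τ (z + Pi.single 2 1)
          * (τ (z + Pi.single 1 1) * τ (z + Pi.single 0 1 + Pi.single 2 1)
            - τ (z + Pi.single 2 1) * τ (z + Pi.single 0 1 + Pi.single 1 1)
            - τ (z + Pi.single 0 1) * τ (z + Pi.single 1 1 + Pi.single 2 1)))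
        / ((τ z)^2 * τ (z + Pi.single 0 1 + Pi.single 1 1)
            * τ (z + Pi.single 0 1 + Pi.single 2 1) * τ (z + Pi.single 1 1 + Pi.single 2 1)) := by
      rw [← hDval z, hskew 0 2 z]
      try ring
    rw [A02 (z + Pi.single 1 1),
      show z + Pi.single 1 1 + Pi.single 0 1 = z + Pi.single 0 1 + Pi.single 1 1 from
        add_right_comm z _ _]
    exact core2 (τ z) (τ (z + Pi.single 0 1)) (τ (z + Pi.single 1 1)) (τ (z + Pi.single 2 1))
      (τ (z + Pi.single 0 1 + Pi.single 1 1)) (τ (z + Pi.single 0 1 + Pi.single 2 1))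
      (τ (z + Pi.single 1 1 + Pi.single 2 1))
      (τ (z + Pi.single 0 1 + Pi.single 1 1 + Pi.single 2 1)) _ _
      (hτ _) (hτ _) (hτ _) (hτ _) (hτ _) (hτ _) (hτ _) (hτ _) (hSall z) (A02 z) hD
  have E3 : ∀ z, (a 1 2 (z + Pi.single 0 1) = -a 1 2 z
      / (a 1 2 z * (-a 0 2 z) + (-a 0 2 z) * a 0 1 z + a 0 1 z * a 1 2 z))
      ↔ (τ z * τ (z + Pi.single 0 1 + Pi.single 1 1 + Pi.single 2 1)
          - τ (z + Pi.single 0 1) * τ (z + Pi.single 1 1 + Pi.single 2 1)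
          + τ (z + Pi.single 1 1) * τ (z + Pi.single 0 1 + Pi.single 2 1)
          - τ (z + Pi.single 2 1) * τ (z + Pi.single 0 1 + Pi.single 1 1) = 0) := by
    intro z
    have hD : a 1 2 z * (-a 0 2 z) + (-a 0 2 z) * a 0 1 z + a 0 1 z * a 1 2 z
        = (τ (z + Pi.single 0 1) * τ (z + Pi.single 1 1) * τ (z + Pi.single 2 1)
          * (τ (z + Pi.single 1 1) * τ (z + Pi.single 0 1 + Pi.single 2 1)
            - τ (z + Pi.single 2 1) * τ (z + Pi.single 0 1 + Pi.single 1 1)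
            - τ (z + Pi.single 0 1) * τ (z + Pi.single 1 1 + Pi.single 2 1)))
        / ((τ z)^2 * τ (z + Pi.single 0 1 + Pi.single 1 1)
            * τ (z + Pi.single 0 1 + Pi.single 2 1) * τ (z + Pi.single 1 1 + Pi.single 2 1)) := by
      rw [← hDval z, hskew 0 2 z]
      try ring
    rw [A12 (z + Pi.single 0 1),
      show z + Pi.single 0 1 + Pi.single 1 1 + Pi.single 2 1
          = z + Pi.single 0 1 + Pi.single 1 1 + Pi.single 2 1 from rfl]
    exact core3 (τ z) (τ (z + Pi.single 0 1)) (τ (z + Pi.single 1 1)) (τ (z + Pi.single 2 1))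
      (τ (z + Pi.single 0 1 + Pi.single 1 1)) (τ (z + Pi.single 0 1 + Pi.single 2 1))
      (τ (z + Pi.single 1 1 + Pi.single 2 1))
      (τ (z + Pi.single 0 1 + Pi.single 1 1 + Pi.single 2 1)) _ _
      (hτ _) (hτ _) (hτ _) (hτ _) (hτ _) (hτ _) (hτ _) (hτ _) (hSall z) (A12 z) hD
  constructor
  · intro H z
    have h := H 0 1 2 (by decide) (by decide) (by decide) z
    simp only [hskew 0 1, hskew 0 2, hskew 1 2] at h
    exact (E1 z).mp h
  · intro H i j k hij hjk hik z
    have h3 : ∀ m : Fin 3, m = 0 ∨ m = 1 ∨ m = 2 := by decide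
    rcases h3 i with rfl | rfl | rfl <;> rcases h3 j with rfl | rfl | rfl <;>
      rcases h3 k with rfl | rfl | rfl
    all_goals try exact absurd rfl hij
    all_goals try exact absurd rfl hjk
    all_goals try exact absurd rfl hik
    · simp only [hskew 0 1, hskew 0 2, hskew 1 2]
      exact (E1 z).mpr (H z)
    · simp only [hskew 0 1, hskew 0 2, hskew 1 2]
      exact (E2 z).mpr (H z)
    · simp only [hskew 0 1, hskew 0 2, hskew 1 2]
      exact flipRel (by ring) ((E1 z).mpr (H z))
    · simp only [hskew 0 1, hskew 0 2, hskew 1 2]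
      exact (E3 z).mpr (H z)
    · simp only [hskew 0 1, hskew 0 2, hskew 1 2]
      exact flipRel (by ring) ((E2 z).mpr (H z))
    · simp only [hskew 0 1, hskew 0 2, hskew 1 2]
      exact flipRel (by ring) ((E3 z).mpr (H z))
end

section
/- Let ρ : ℤ² → ℝ be nowhere-zero and a^{12} : ℤ² → ℝ nowhere-zero, and define the evolution equations ρ₁₁₂ = ρ₁₁ ρ₂ / (ρ a^{12} a^{12}₁) and ρ₁₂₂ = ρ₂₂ ρ₁ / (ρ a^{12} a^{12}₂). Then these two evolution equations are compatible: starting from values ρ, ρ₁, ρ₂, ρ₁₁, ρ₂₂, ρ₁₂ and coefficients a^{12} satisfying the equations, the two ways of computing ρ₁₁₂₂ — shifting the first equation in direction 2, or the second in direction 1 — give the same value, i.e., (ρ₁₁₂)₂ = (ρ₁₂₂)₁ modulo the evolution equations. -/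
/-- The two evolution equations expressing the C¹-condition for a crisscrossed
A-surface are compatible: the two ways of computing ρ₁₁₂₂ agree. -/
theorem c1_evolution_compatible
    (ρ a : ℤ × ℤ → ℝ) (hρ : ∀ z, ρ z ≠ 0) (ha : ∀ z, a z ≠ 0) :
    ∀ z : ℤ × ℤ,
      (ρ (z + (2, 0)) * ρ (z + (0, 1)) / (ρ z * (a z * a (z + (1, 0))))) * ρ (z + (0, 2))
          / (ρ (z + (0, 1)) * (a (z + (0, 1)) * a (z + (1, 1))))
        = (ρ (z + (0, 2)) * ρ (z + (1, 0)) / (ρ z * (a z * a (z + (0, 1))))) * ρ (z + (2, 0))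
          / (ρ (z + (1, 0)) * (a (z + (1, 0)) * a (z + (1, 1)))) := by
  intro z
  have d1 : ρ z * (a z * a (z + (1, 0))) * (ρ (z + (0, 1)) * (a (z + (0, 1)) * a (z + (1, 1)))) ≠ 0 := by
    simp [hρ, ha]
  have d2 : ρ z * (a z * a (z + (0, 1))) * (ρ (z + (1, 0)) * (a (z + (1, 0)) * a (z + (1, 1)))) ≠ 0 := by
    simp [hρ, ha]
  rw [div_mul_eq_mul_div, div_mul_eq_mul_div, div_div, div_div, div_eq_div_iff d1 d2]
  ring
end

section
/- Fix q : {1,…,m}² × ℤ^m → ℝ with q^{ij} = q^{ji} nowhere-zero satisfying q^{ij} q^{ij}_i = 1 for all i ≠ j (subscript i denotes shift in direction i). Then for each pair i ≠ j there exists a function α^{ij} : ℤ^m → ℝ, independent of the coordinates z_i and z_j, such that q^{ij}(z) = (α^{ij}(z))^{(−1)^{z_i + z_j}}. -/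
/-- General solution of q^{ij} q^{ij}_i = 1: each q^{ij} has the form
(α^{ij})^{(-1)^{z_i+z_j}} with α^{ij} independent of z_i and z_j. -/
theorem q_general_solution (m : ℕ)
    (q : Fin m → Fin m → (Fin m → ℤ) → ℝ)
    (hsymm : ∀ i j z, q i j z = q j i z)
    (hne : ∀ i j z, q i j z ≠ 0)
    (hq : ∀ (i j : Fin m), i ≠ j → ∀ z : Fin m → ℤ,
      q i j z * q i j (z + Pi.single i 1) = 1) :
    ∀ (i j : Fin m), i ≠ j →
      ∃ α : (Fin m → ℤ) → ℝ, (∀ z, α z ≠ 0) ∧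
        (∀ z z' : Fin m → ℤ, (∀ k, k ≠ i → k ≠ j → z k = z' k) → α z = α z') ∧
        (∀ z, q i j z = if Even (z i + z j) then α z else (α z)⁻¹) := by
  intro i j hij
  set A : (Fin m → ℤ) → ℝ :=
    fun z => if Even (z i + z j) then q i j z else (q i j z)⁻¹ with hA
  -- shift relations for q
  have hstepi : ∀ z, q i j (z + Pi.single i 1) = (q i j z)⁻¹ := by
    intro z
    exact (eq_inv_of_mul_eq_one_left (by rw [mul_comm]; exact hq i j hij z))
  have hstepj : ∀ z, q i j (z + Pi.single j 1) = (q i j z)⁻¹ := by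
    intro z
    have h := hq j i hij.symm z
    rw [← hsymm i j, ← hsymm i j] at h
    exact (eq_inv_of_mul_eq_one_left (by rw [mul_comm]; exact h))
  -- parity flips
  have hparityi : ∀ z : Fin m → ℤ,
      (Even ((z + Pi.single i 1 : Fin m → ℤ) i + (z + Pi.single i 1 : Fin m → ℤ) j)
       ↔ ¬ Even (z i + z j)) := by
    intro z
    have h1 : (z + Pi.single i 1 : Fin m → ℤ) i = z i + 1 := by simp
    have h2 : (z + Pi.single i 1 : Fin m → ℤ) j = z j := by
      simp [Pi.single_eq_of_ne hij.symm]
    rw [h1, h2]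
    constructor
    · intro h he
      have := (Int.even_add_one).mp (by rwa [show z i + 1 + z j = (z i + z j) + 1 by ring] at h)
      exact this he
    · intro h
      rw [show z i + 1 + z j = (z i + z j) + 1 by ring]
      exact Int.even_add_one.mpr h
  have hparityj : ∀ z : Fin m → ℤ,
      (Even ((z + Pi.single j 1 : Fin m → ℤ) i + (z + Pi.single j 1 : Fin m → ℤ) j)
       ↔ ¬ Even (z i + z j)) := by
    intro z
    have h1 : (z + Pi.single j 1 : Fin m → ℤ) j = z j + 1 := by simp
    have h2 : (z + Pi.single j 1 : Fin m → ℤ) i = z i := by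
      simp [Pi.single_eq_of_ne hij]
    rw [h1, h2]
    constructor
    · intro h he
      have := (Int.even_add_one).mp (by rwa [show z i + (z j + 1) = (z i + z j) + 1 by ring] at h)
      exact this he
    · intro h
      rw [show z i + (z j + 1) = (z i + z j) + 1 by ring]
      exact Int.even_add_one.mpr h
  -- A invariant under unit shifts
  have keyi : ∀ z, A (z + Pi.single i 1) = A z := by
    intro z
    by_cases he : Even (z i + z j)
    · have : ¬ Even ((z + Pi.single i 1 : Fin m → ℤ) i + (z + Pi.single i 1 : Fin m → ℤ) j) := by
        rw [hparityi z]; exact fun h => h he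
      simp only [hA, if_neg this, if_pos he, hstepi, inv_inv]
    · have : Even ((z + Pi.single i 1 : Fin m → ℤ) i + (z + Pi.single i 1 : Fin m → ℤ) j) :=
        (hparityi z).mpr he
      simp only [hA, if_pos this, if_neg he, hstepi]
  have keyj : ∀ z, A (z + Pi.single j 1) = A z := by
    intro z
    by_cases he : Even (z i + z j)
    · have : ¬ Even ((z + Pi.single j 1 : Fin m → ℤ) i + (z + Pi.single j 1 : Fin m → ℤ) j) := by
        rw [hparityj z]; exact fun h => h he
      simp only [hA, if_neg this, if_pos he, hstepj, inv_inv]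
    · have : Even ((z + Pi.single j 1 : Fin m → ℤ) i + (z + Pi.single j 1 : Fin m → ℤ) j) :=
        (hparityj z).mpr he
      simp only [hA, if_pos this, if_neg he, hstepj]
  -- A invariant under arbitrary integer shifts
  have shiftinv : ∀ (t : Fin m), (∀ z, A (z + Pi.single t 1) = A z) →
      ∀ (n : ℤ) (z), A (z + Pi.single t n) = A z := by
    intro t hkey n
    induction n using Int.induction_on with
    | zero => intro z; simp
    | succ k ih =>
        intro z
        have : z + Pi.single t ((k : ℤ) + 1) = (z + Pi.single t (k : ℤ)) + Pi.single t 1 := by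
          rw [Pi.single_add, add_assoc]
        rw [this, hkey, ih]
    | pred k ih =>
        intro z
        have h1 : (z + Pi.single t (-(k:ℤ) - 1)) + Pi.single t 1 = z + Pi.single t (-(k:ℤ)) := by
          rw [add_assoc, ← Pi.single_add]; ring_nf
        have := hkey (z + Pi.single t (-(k:ℤ) - 1))
        rw [h1, ih] at this
        exact this.symm
  refine ⟨A, ?_, ?_, ?_⟩
  · intro z
    by_cases he : Even (z i + z j)
    · simp only [hA, if_pos he]; exact hne i j z
    · simp only [hA, if_neg he]; exact inv_ne_zero (hne i j z)
  · intro z z' hzz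
    have hz' : z' = (z + Pi.single i (z' i - z i)) + Pi.single j (z' j - z j) := by
      funext k
      by_cases hk : k = i
      · subst hk
        simp only [Pi.add_apply, Pi.single_eq_same, Pi.single_eq_of_ne hij]
        ring
      · by_cases hk' : k = j
        · subst hk'
          simp only [Pi.add_apply, Pi.single_eq_same, Pi.single_eq_of_ne hij.symm]
          ring
        · simp only [Pi.add_apply, Pi.single_eq_of_ne hk, Pi.single_eq_of_ne hk',
            hzz k hk hk', add_zero]
    rw [hz', shiftinv j keyj, shiftinv i keyi]
  · intro z
    by_cases he : Even (z i + z j)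
    · simp only [hA, if_pos he]
    · simp only [hA, if_neg he, inv_inv]
end

section
/- Let ξ : ℤ³ → ℝ be nowhere-zero and satisfy ξ_i ξ_j = ξ ξ_{ij} for all i ≠ j in {1,2,3} (i.e., q^{ij} = ξ_i ξ_j / (ξ ξ_{ij}) = 1 identically). Then ξ factorizes: there exist functions f¹, f², f³ : ℤ → ℝ, each nowhere-zero, such that ξ(z₁, z₂, z₃) = f¹(z₁) f²(z₂) f³(z₃) for all (z₁,z₂,z₃) ∈ ℤ³. -/
/-- General solution of the multiplicative discrete wave equation
ξ_i ξ_j = ξ ξ_{ij}: the function ξ factorizes as f¹(z₁) f²(z₂) f³(z₃). -/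
theorem xi_factorizes
    (ξ : (Fin 3 → ℤ) → ℝ) (hξ : ∀ z, ξ z ≠ 0)
    (h : ∀ (i j : Fin 3), i ≠ j → ∀ z : Fin 3 → ℤ,
      ξ (z + Pi.single i 1) * ξ (z + Pi.single j 1)
        = ξ z * ξ (z + Pi.single i 1 + Pi.single j 1)) :
    ∃ f : Fin 3 → ℤ → ℝ, (∀ i t, f i t ≠ 0) ∧
      ∀ z : Fin 3 → ℤ, ξ z = f 0 (z 0) * f 1 (z 1) * f 2 (z 2) := by
  -- one-step invariance of the ratio in direction i under a unit shift in direction j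
  have inv1 : ∀ i j : Fin 3, i ≠ j → ∀ z : Fin 3 → ℤ,
      ξ (z + Pi.single j 1 + Pi.single i 1) / ξ (z + Pi.single j 1)
        = ξ (z + Pi.single i 1) / ξ z := by
    intro i j hij z
    have hz := h i j hij z
    rw [div_eq_div_iff (hξ _) (hξ _)]
    have e : z + Pi.single j 1 + Pi.single i 1 = z + Pi.single i 1 + Pi.single j 1 := by abel
    rw [e]
    linear_combination -hz
  -- invariance under arbitrary integer shift in direction j
  have invn : ∀ i j : Fin 3, i ≠ j → ∀ (n : ℤ), ∀ z : Fin 3 → ℤ,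
      ξ (z + Pi.single j n + Pi.single i 1) / ξ (z + Pi.single j n)
        = ξ (z + Pi.single i 1) / ξ z := by
    intro i j hij n
    induction n using Int.induction_on with
    | zero => intro z; simp
    | succ n ih =>
      intro z
      have e1 : z + Pi.single j ((n : ℤ) + 1) = z + Pi.single j (n : ℤ) + Pi.single j 1 := by
        rw [Pi.single_add, ← add_assoc]
      have key := inv1 i j hij (z + Pi.single j (n : ℤ))
      rw [e1, key]
      exact ih z
    | pred n ih =>
      intro z
      have key := inv1 i j hij (z + Pi.single j (-(n : ℤ) - 1))
      have e1 : z + Pi.single j (-(n : ℤ) - 1) + Pi.single j 1 = z + Pi.single j (-(n : ℤ)) := by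
        have : (-(n : ℤ) - 1) + 1 = -(n : ℤ) := by ring
        rw [add_assoc, ← Pi.single_add, this]
      rw [e1] at key
      rw [← key]
      exact ih z
  -- invariance of arbitrary-length ratios
  have invc : ∀ i j : Fin 3, i ≠ j → ∀ (c : ℤ), ∀ (n : ℤ), ∀ z : Fin 3 → ℤ,
      ξ (z + Pi.single j n + Pi.single i c) / ξ (z + Pi.single j n)
        = ξ (z + Pi.single i c) / ξ z := by
    intro i j hij c
    induction c using Int.induction_on with
    | zero =>
      intro n z
      simp only [Pi.single_zero, add_zero]
      rw [div_self (hξ _), div_self (hξ _)]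
    | succ c ih =>
      intro n z
      have e1 : ∀ w : Fin 3 → ℤ, w + Pi.single i ((c : ℤ) + 1)
          = w + Pi.single i (c : ℤ) + Pi.single i 1 := by
        intro w; rw [Pi.single_add, ← add_assoc]
      rw [e1, e1]
      have split : ∀ w : Fin 3 → ℤ,
          ξ (w + Pi.single i (c : ℤ) + Pi.single i 1) / ξ w
            = (ξ (w + Pi.single i (c : ℤ) + Pi.single i 1) / ξ (w + Pi.single i (c : ℤ)))
              * (ξ (w + Pi.single i (c : ℤ)) / ξ w) := by
        intro w
        rw [div_mul_div_cancel₀]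
        exact hξ _
      rw [split, split]
      have h1 : ξ (z + Pi.single j n + Pi.single i (c : ℤ) + Pi.single i 1)
            / ξ (z + Pi.single j n + Pi.single i (c : ℤ))
          = ξ (z + Pi.single i (c : ℤ) + Pi.single i 1) / ξ (z + Pi.single i (c : ℤ)) := by
        have e2 : z + Pi.single j n + Pi.single i (c : ℤ)
            = z + Pi.single i (c : ℤ) + Pi.single j n := by abel
        have e3 : z + Pi.single j n + Pi.single i (c : ℤ) + Pi.single i 1
            = z + Pi.single i (c : ℤ) + Pi.single j n + Pi.single i 1 := by abel
        rw [e3, e2]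
        exact invn i j hij n _
      rw [h1, ih n z]
    | pred c ih =>
      intro n z
      have estep : ∀ w : Fin 3 → ℤ, w + Pi.single i (-(c : ℤ) - 1) + Pi.single i 1
          = w + Pi.single i (-(c : ℤ)) := by
        intro w
        have : (-(c : ℤ) - 1) + 1 = -(c : ℤ) := by ring
        rw [add_assoc, ← Pi.single_add, this]
      have key1 : ξ (z + Pi.single j n + Pi.single i (-(c : ℤ) - 1) + Pi.single i 1)
            / ξ (z + Pi.single j n + Pi.single i (-(c : ℤ) - 1))
          = ξ (z + Pi.single i (-(c : ℤ) - 1) + Pi.single i 1)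
            / ξ (z + Pi.single i (-(c : ℤ) - 1)) := by
        have e2 : z + Pi.single j n + Pi.single i (-(c : ℤ) - 1)
            = z + Pi.single i (-(c : ℤ) - 1) + Pi.single j n := by abel
        have e3 : z + Pi.single j n + Pi.single i (-(c : ℤ) - 1) + Pi.single i 1
            = z + Pi.single i (-(c : ℤ) - 1) + Pi.single j n + Pi.single i 1 := by abel
        rw [e3, e2]
        exact invn i j hij n _
      rw [estep, estep] at key1
      have hih := ih n z
      have hA := hξ (z + Pi.single j n + Pi.single i (-(c : ℤ) - 1))
      have hA' := hξ (z + Pi.single j n + Pi.single i (-(c : ℤ)))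
      have hB := hξ (z + Pi.single j n)
      have ha := hξ (z + Pi.single i (-(c : ℤ) - 1))
      have ha' := hξ (z + Pi.single i (-(c : ℤ)))
      have hb := hξ z
      field_simp at key1 hih ⊢
      -- key1 : A' * a = a' * A ; hih : A' * b = a' * B (up to ordering); goal : A * b = a * B
      apply mul_left_cancel₀ ha'
      linear_combination -(ξ z) * key1 + ξ (z + Pi.single i (-(c : ℤ) - 1)) * hih
  -- assemble the factorization
  refine ⟨![fun t => ξ ((Pi.single 0 t : Fin 3 → ℤ)) / ξ 0, fun t => ξ ((Pi.single 1 t : Fin 3 → ℤ)) / ξ 0,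
      fun t => ξ ((Pi.single 2 t : Fin 3 → ℤ))], ?_, ?_⟩
  · intro i t
    fin_cases i
    · exact div_ne_zero (hξ _) (hξ _)
    · exact div_ne_zero (hξ _) (hξ _)
    · exact hξ _
  · intro z
    have hzdec : z = (Pi.single 1 (z 1) : Fin 3 → ℤ) + (Pi.single 2 (z 2) : Fin 3 → ℤ) + (Pi.single 0 (z 0) : Fin 3 → ℤ) := by
      funext k; fin_cases k <;> simp
    have h0 : ξ ((Pi.single 1 (z 1) : Fin 3 → ℤ) + (Pi.single 2 (z 2) : Fin 3 → ℤ) + (Pi.single 0 (z 0) : Fin 3 → ℤ))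
        / ξ ((Pi.single 1 (z 1) : Fin 3 → ℤ) + (Pi.single 2 (z 2) : Fin 3 → ℤ)) = ξ ((Pi.single 0 (z 0) : Fin 3 → ℤ)) / ξ 0 := by
      have step1 := invc 0 2 (by decide) (z 0) (z 2) ((Pi.single 1 (z 1) : Fin 3 → ℤ))
      have step2 := invc 0 1 (by decide) (z 0) (z 1) 0
      simp only [zero_add] at step2
      rw [step1, step2]
    have h1 : ξ ((Pi.single 1 (z 1) : Fin 3 → ℤ) + (Pi.single 2 (z 2) : Fin 3 → ℤ)) / ξ ((Pi.single 2 (z 2) : Fin 3 → ℤ))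
        = ξ ((Pi.single 1 (z 1) : Fin 3 → ℤ)) / ξ 0 := by
      have step := invc 1 2 (by decide) (z 1) (z 2) 0
      simp only [zero_add] at step
      have e : (Pi.single 1 (z 1) : Fin 3 → ℤ) + (Pi.single 2 (z 2) : Fin 3 → ℤ)
          = (Pi.single 2 (z 2) : Fin 3 → ℤ) + (Pi.single 1 (z 1) : Fin 3 → ℤ) := by abel
      rw [e, step]
    rw [hzdec]
    simp only [Matrix.cons_val_zero, Matrix.cons_val_one, Matrix.head_cons,
      Matrix.cons_val_two, Matrix.tail_cons]
    have hz0 : ((Pi.single 1 (z 1) : Fin 3 → ℤ) + (Pi.single 2 (z 2) : Fin 3 → ℤ) + (Pi.single 0 (z 0) : Fin 3 → ℤ)) 0 = z 0 := by simp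
    have hz1 : ((Pi.single 1 (z 1) : Fin 3 → ℤ) + (Pi.single 2 (z 2) : Fin 3 → ℤ) + (Pi.single 0 (z 0) : Fin 3 → ℤ)) 1 = z 1 := by simp
    have hz2 : ((Pi.single 1 (z 1) : Fin 3 → ℤ) + (Pi.single 2 (z 2) : Fin 3 → ℤ) + (Pi.single 0 (z 0) : Fin 3 → ℤ)) 2 = z 2 := by simp
    rw [hz0, hz1, hz2]
    have hd1 := hξ ((Pi.single 1 (z 1) : Fin 3 → ℤ) + (Pi.single 2 (z 2) : Fin 3 → ℤ))
    have hd2 := hξ ((Pi.single 2 (z 2) : Fin 3 → ℤ))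
    have hd0 := hξ (0 : Fin 3 → ℤ)
    field_simp at h0 h1 ⊢
    linear_combination ξ 0 * h0 + ξ ((Pi.single 0 (z 0) : Fin 3 → ℤ)) * h1
end

section
/- Let a : ℤ² → ℝ be positive and let Φ : ℤ² → ℝ be positive on the coordinate axes {0}×ℤ and ℤ×{0}. Suppose Φ is extended to all of ℤ² (in the quadrant ℕ×ℕ) by the evolution Φ₁₂ = a (Φ₁ + Φ₂) − Φ, and that at every lattice point the coefficient satisfies a > Φ/(Φ₁ + Φ₂). Then Φ > 0 on all of ℕ × ℕ, and consequently the coefficients a²³ = Φ/Φ₂, a³¹ = Φ/Φ₁ and a₃ = (Φ₁Φ₂/(Φ Φ₁₂)) a are all positive on ℕ × ℕ. -/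
/-- Positivity propagation for the potential Φ: if Φ is positive on the axes,
evolves by Φ₁₂ = a(Φ₁+Φ₂) − Φ, and a > Φ/(Φ₁+Φ₂) everywhere, then Φ is
positive on ℕ × ℕ and all induced Moutard coefficients are positive. -/
theorem phi_positivity_propagation
    (a Φ : ℕ → ℕ → ℝ)
    (hapos : ∀ m n, 0 < a m n)
    (haxis1 : ∀ n, 0 < Φ 0 n) (haxis2 : ∀ m, 0 < Φ m 0)
    (hev : ∀ m n, Φ (m + 1) (n + 1) = a m n * (Φ (m + 1) n + Φ m (n + 1)) - Φ m n)
    (hbound : ∀ m n, Φ m n / (Φ (m + 1) n + Φ m (n + 1)) < a m n) :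
    ∀ m n, 0 < Φ m n ∧
      0 < Φ m n / Φ m (n + 1) ∧
      0 < Φ m n / Φ (m + 1) n ∧
      0 < (Φ (m + 1) n * Φ m (n + 1) / (Φ m n * Φ (m + 1) (n + 1))) * a m n := by
  have hpos : ∀ m n, 0 < Φ m n := by
    intro m
    induction m with
    | zero => exact haxis1
    | succ m ih =>
      intro n
      induction n with
      | zero => exact haxis2 (m + 1)
      | succ n ihn =>
        have hs : 0 < Φ (m + 1) n + Φ m (n + 1) := add_pos ihn (ih (n + 1))
        have h := (div_lt_iff₀ hs).mp (hbound m n)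
        rw [hev m n]
        linarith
  intro m n
  refine ⟨hpos m n, div_pos (hpos m n) (hpos m (n + 1)),
    div_pos (hpos m n) (hpos (m + 1) n), mul_pos (div_pos
      (mul_pos (hpos (m + 1) n) (hpos m (n + 1)))
      (mul_pos (hpos m n) (hpos (m + 1) (n + 1)))) (hapos m n)⟩
end

section
/- Let τ : ℤ³ → ℝ be nowhere-zero and satisfy the discrete BKP equation in the form τ τ₁₂₃ − τ₁ τ₂₃ − τ₂ τ₁₃ + τ₃ τ₁₂ = 0. Define a²¹ = τ₂τ₁/(τ τ₁₂), a²³ = τ₂τ₃/(τ τ₂₃), a³¹ = τ₃τ₁/(τ τ₁₃) (and skew-symmetric counterparts a^{ji} = −a^{ij}). Then these coefficients satisfy the cube relation a^{ij}_k = −a^{ij}/(a^{ij}a^{jk} + a^{jk}a^{ki} + a^{ki}a^{ij}) for pairwise distinct i, j, k, assuming the relevant denominators are nonzero. -/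
set_option maxHeartbeats 2000000


/-- If τ satisfies the discrete BKP equation τ τ₁₂₃ − τ₁ τ₂₃ − τ₂ τ₁₃ + τ₃ τ₁₂ = 0
and the Moutard coefficients (a²¹, a²³, a³¹) are parametrized by τ, then they
satisfy the cube relation. Here lattice direction k ∈ {0,1,2} corresponds to
the paper's direction k+1. -/
theorem bkp_implies_cube_relation
    (τ : (Fin 3 → ℤ) → ℝ) (hτ : ∀ z, τ z ≠ 0)
    (hbkp : ∀ z : Fin 3 → ℤ,
      τ z * τ (z + Pi.single 0 1 + Pi.single 1 1 + Pi.single 2 1)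
        - τ (z + Pi.single 0 1) * τ (z + Pi.single 1 1 + Pi.single 2 1)
        - τ (z + Pi.single 1 1) * τ (z + Pi.single 0 1 + Pi.single 2 1)
        + τ (z + Pi.single 2 1) * τ (z + Pi.single 0 1 + Pi.single 1 1) = 0)
    (a : Fin 3 → Fin 3 → (Fin 3 → ℤ) → ℝ)
    (ha21 : ∀ z, a 1 0 z = τ (z + Pi.single 1 1) * τ (z + Pi.single 0 1)
        / (τ z * τ (z + Pi.single 1 1 + Pi.single 0 1)))
    (ha23 : ∀ z, a 1 2 z = τ (z + Pi.single 1 1) * τ (z + Pi.single 2 1)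
        / (τ z * τ (z + Pi.single 1 1 + Pi.single 2 1)))
    (ha31 : ∀ z, a 2 0 z = τ (z + Pi.single 2 1) * τ (z + Pi.single 0 1)
        / (τ z * τ (z + Pi.single 2 1 + Pi.single 0 1)))
    (hskew : ∀ i j z, a j i z = - a i j z) :
    ∀ (i j k : Fin 3), i ≠ j → j ≠ k → i ≠ k → ∀ z : Fin 3 → ℤ,
      a i j z * a j k z + a j k z * a k i z + a k i z * a i j z ≠ 0 →
      a i j (z + Pi.single k 1)
        = - a i j z / (a i j z * a j k z + a j k z * a k i z + a k i z * a i j z) := by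
  intro i j k hij hjk hik z hS
  have h := hbkp z
  have e10 : ∀ w : Fin 3 → ℤ, w + Pi.single 1 1 + Pi.single 0 1
      = w + Pi.single 0 1 + Pi.single 1 1 := fun w => add_right_comm w _ _
  have e20 : ∀ w : Fin 3 → ℤ, w + Pi.single 2 1 + Pi.single 0 1
      = w + Pi.single 0 1 + Pi.single 2 1 := fun w => add_right_comm w _ _
  have e21 : ∀ w : Fin 3 → ℤ, w + Pi.single 2 1 + Pi.single 1 1
      = w + Pi.single 1 1 + Pi.single 2 1 := fun w => add_right_comm w _ _
  have hi : ∀ m : Fin 3, m = 0 ∨ m = 1 ∨ m = 2 := by decide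
  rcases hi i with rfl|rfl|rfl <;> rcases hi j with rfl|rfl|rfl <;> rcases hi k with rfl|rfl|rfl <;>
    first
      | exact absurd rfl hij
      | exact absurd rfl hjk
      | exact absurd rfl hik
      | (rw [eq_div_iff hS]
         simp only [hskew 1 0, hskew 1 2, hskew 2 0, ha21, ha23, ha31, e10, e20, e21]
         have hT := hτ z
         have hT0 := hτ (z + Pi.single 0 1)
         have hT1 := hτ (z + Pi.single 1 1)
         have hT2 := hτ (z + Pi.single 2 1)
         have hT01 := hτ (z + Pi.single 0 1 + Pi.single 1 1)
         have hT02 := hτ (z + Pi.single 0 1 + Pi.single 2 1)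
         have hT12 := hτ (z + Pi.single 1 1 + Pi.single 2 1)
         have hT012 := hτ (z + Pi.single 0 1 + Pi.single 1 1 + Pi.single 2 1)
         set T := τ z
         set T0 := τ (z + Pi.single 0 1)
         set T1 := τ (z + Pi.single 1 1)
         set T2 := τ (z + Pi.single 2 1)
         set T01 := τ (z + Pi.single 0 1 + Pi.single 1 1)
         set T02 := τ (z + Pi.single 0 1 + Pi.single 2 1)
         set T12 := τ (z + Pi.single 1 1 + Pi.single 2 1)
         set T012 := τ (z + Pi.single 0 1 + Pi.single 1 1 + Pi.single 2 1)
         field_simp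
         first
           | linear_combination (-1 : ℝ) * h
           | linear_combination h)
end
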